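/- Let q be a prime power, f : F_q^k → S a function, t_d ≤ t_f natural numbers, and λ ≥ 1. Suppose there exists a map Col : F_q^k → {1, …, λ} such that Col(u) ≠ Col(v) whenever d(u, v) ≤ 2t_f and f(u) ≠ f(v) (such a coloring exists in particular for any locally (2t_f, λ)-bounded function whose function balls are contiguous blocks with respect to some total order on Im(f)). Suppose further there exists a systematic [n, k] linear code over F_q with minimum distance at least 2t_d + 1. Then r_f(k, t_d, t_f) ≤ n − k + N(λ, 2(t_f − t_d)), where N(λ, D) is the minimum length of a q-ary code with λ codewords and pairwise Hamming distance at least D. -/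

import Mathlib

lemma hammingDist_append {F : Type*} [DecidableEq F] {m l : ℕ}
    (a a' : Fin m → F) (b b' : Fin l → F) :
    hammingDist (Fin.append a b) (Fin.append a' b') = hammingDist a a' + hammingDist b b' := by
  simp only [hammingDist, Finset.card_filter, Fin.sum_univ_add, Fin.append_left, Fin.append_right]

lemma hammingDist_comp_equiv {F : Type*} [DecidableEq F] {α β : Type*} [Fintype α] [Fintype β]
    [DecidableEq α] [DecidableEq β] (e : α ≃ β) (x y : β → F) :
    hammingDist (x ∘ e) (y ∘ e) = hammingDist x y := by
  simp only [hammingDist]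
  exact Finset.card_equiv e (by simp)

lemma exists_code (F : Type*) [DecidableEq F] [Zero F] [One F] (h01 : (0:F) ≠ 1) (M d : ℕ) :
    ∃ p : Fin M → Fin (M * d) → F, ∀ i j : Fin M, i ≠ j → d ≤ hammingDist (p i) (p j) := by
  refine ⟨fun i j => if (j : ℕ) / d = i then 1 else 0, ?_⟩
  intro i j hij
  rcases Nat.eq_zero_or_pos d with hd | hd
  · simp [hd]
  have hinj : ∀ t : Fin d, i.val * d + t.val < M * d := by
    intro t
    calc i.val * d + t.val < i.val * d + d := by omega
    _ = (i.val + 1) * d := by ring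
    _ ≤ M * d := Nat.mul_le_mul_right d i.isLt
  have key : ∀ t : Fin d, (i.val * d + t.val) / d = i.val := by
    intro t
    rw [add_comm, Nat.add_mul_div_right _ _ hd, Nat.div_eq_of_lt t.isLt, zero_add]
  rw [hammingDist]
  refine le_trans (le_of_eq (Finset.card_fin d).symm)
    (Finset.card_le_card_of_injOn (fun t : Fin d => (⟨i.val * d + t.val, hinj t⟩ : Fin (M * d))) ?_ ?_)
  · intro t _
    simp only [Finset.mem_coe, Finset.mem_filter, Finset.mem_univ, true_and]
    rw [key t]
    have : (i : ℕ) ≠ (j : ℕ) := fun h => hij (Fin.val_injective h)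
    simp [this, h01.symm]
  · intro t1 _ t2 _ h
    have := Fin.mk.injEq .. ▸ h
    exact Fin.val_injective (by omega)


/-- An `(f, t_d, t_f)`-FCC (with `d_d = 2t_d+1`, `d_f = 2t_f+1`). -/
def IsFCC {F S : Type*} [Fintype F] [DecidableEq F] {k r : ℕ}
    (f : (Fin k → F) → S) (dd df : ℕ)
    (c : (Fin k → F) → (Fin (k + r) → F)) : Prop :=
  (∀ u i, c u (Fin.castAdd r i) = u i) ∧
  (∀ u v, u ≠ v → dd ≤ hammingDist (c u) (c v)) ∧
  (∀ u v, f u ≠ f v → df ≤ hammingDist (c u) (c v))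

/-- The optimal redundancy `r_f(k, t_d, t_f)`. -/
noncomputable def optRedundancy {F S : Type*} [Fintype F] [DecidableEq F] {k : ℕ}
    (f : (Fin k → F) → S) (dd df : ℕ) : ℕ :=
  sInf {r : ℕ | ∃ c : (Fin k → F) → (Fin (k + r) → F), IsFCC f dd df c}

/-- `N(M, d)`: the minimum length of a code over `F` with `M` codewords and pairwise Hamming
distance at least `d`. -/
noncomputable def Ncode (F : Type*) [Fintype F] [DecidableEq F] (M d : ℕ) : ℕ :=
  sInf {n : ℕ | ∃ p : Fin M → Fin n → F, ∀ i j, i ≠ j → d ≤ hammingDist (p i) (p j)}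

/-- Given a coloring `Col : F_q^k → [λ]` separating close vectors with
different function values, and a systematic `[n, k]` linear code over `F_q` of minimum
distance at least `2t_d+1`, we have `r_f(k, t_d, t_f) ≤ n − k + N(λ, 2(t_f − t_d))`. -/
theorem optRedundancy_le_of_coloring
    {F S : Type*} [Field F] [Fintype F] [DecidableEq F]
    {k n : ℕ} (hkn : k ≤ n) (f : (Fin k → F) → S) (td tf lam : ℕ)
    (htdtf : td ≤ tf) (hlam : 1 ≤ lam)
    (Col : (Fin k → F) → Fin lam)
    (hCol : ∀ u v : Fin k → F, hammingDist u v ≤ 2 * tf → f u ≠ f v → Col u ≠ Col v)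
    (C : (Fin k → F) →ₗ[F] (Fin n → F)) (hCinj : Function.Injective C)
    (hCsys : ∀ (u : Fin k → F) (i : Fin k), C u (Fin.castLE hkn i) = u i)
    (hCdist : ∀ u v : Fin k → F, u ≠ v → 2 * td + 1 ≤ hammingDist (C u) (C v)) :
    optRedundancy f (2 * td + 1) (2 * tf + 1) ≤ n - k + Ncode F lam (2 * (tf - td)) := by
  set d := 2 * (tf - td) with hd
  set m := Ncode F lam d with hm
  have hne : {l : ℕ | ∃ p : Fin lam → Fin l → F,
      ∀ i j, i ≠ j → d ≤ hammingDist (p i) (p j)}.Nonempty :=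
    ⟨lam * d, exists_code F zero_ne_one lam d⟩
  obtain ⟨p, hp⟩ : ∃ p : Fin lam → Fin m → F, ∀ i j, i ≠ j → d ≤ hammingDist (p i) (p j) :=
    Nat.sInf_mem hne
  set nk := n - k with hnk
  have hkn' : k + nk = n := by omega
  set w : (Fin k → F) → Fin nk → F := fun u j => C u ⟨k + j.val, by omega⟩ with hw
  set c : (Fin k → F) → Fin (k + (nk + m)) → F :=
    fun u => Fin.append u (Fin.append (w u) (p (Col u))) with hc
  let e : Fin (k + nk) ≃ Fin n := finCongr hkn'
  have happ : ∀ u : Fin k → F, Fin.append u (w u) = (C u) ∘ e := by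
    intro u
    funext i
    induction i using Fin.addCases with
    | left i =>
      rw [Fin.append_left]
      have h1 : e (Fin.castAdd nk i) = Fin.castLE hkn i := by
        apply Fin.val_injective; rfl
      simp only [Function.comp_apply, h1, hCsys]
    | right j =>
      rw [Fin.append_right]
      have h1 : e (Fin.natAdd k j) = (⟨k + j.val, by omega⟩ : Fin n) := by
        apply Fin.val_injective; rfl
      simp only [Function.comp_apply, h1, hw]
  have hfirst : ∀ u v : Fin k → F,
      hammingDist (C u) (C v) = hammingDist u v + hammingDist (w u) (w v) := by
    intro u v
    rw [← hammingDist_comp_equiv e (C u) (C v), ← happ, ← happ, hammingDist_append]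
  have htot : ∀ u v : Fin k → F, hammingDist (c u) (c v)
      = hammingDist u v + (hammingDist (w u) (w v)
        + hammingDist (p (Col u)) (p (Col v))) := by
    intro u v
    rw [hc]
    simp only [hammingDist_append]
  have hmem : (n - k + m) ∈ {r : ℕ | ∃ c : (Fin k → F) → (Fin (k + r) → F),
      IsFCC f (2 * td + 1) (2 * tf + 1) c} := by
    refine ⟨c, ?_, ?_, ?_⟩
    · intro u i
      rw [hc]
      exact Fin.append_left _ _ _
    · intro u v huv
      have h1 := hCdist u v huv
      rw [hfirst] at h1
      rw [htot]
      omega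
    · intro u v hfuv
      have huv : u ≠ v := fun h => hfuv (by rw [h])
      have h1 := hCdist u v huv
      rw [hfirst] at h1
      rw [htot]
      by_cases h2 : hammingDist u v ≤ 2 * tf
      · have h3 := hp _ _ (hCol u v h2 hfuv)
        omega
      · omega
  exact Nat.sInf_le hmem
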